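/- Let A ∈ ℝ^{n×n}, C ∈ ℝ^{q×n}, F ∈ ℝ^{r×n}, and let O be the observability matrix of the pair (C, A). If rank([O; F]) = rank(O) (i.e., the system (C, A; F) is functionally observable), then rank(F·Oᵀ) = rank(F); since Oᵀ is (up to ordering of blocks) the controllability matrix of the dual pair (Aᵀ, Cᵀ), this says that functional observability of (C, A; F) implies output controllability of the dual system (Aᵀ, Cᵀ; F) (weak duality, Theorem 1). -/

import Mathlib

open Matrix intervalIntegral

/-- Observability matrix of the pair `(C, A)`: the vertical block stack of
`C, C*A, C*A², …, C*A^(n-1)`, indexed so that entry `((k, i), j)` is `(C * A^k) i j`. -/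
noncomputable def obsMat {n q : ℕ} (C : Matrix (Fin q) (Fin n) ℝ)
    (A : Matrix (Fin n) (Fin n) ℝ) : Matrix (Fin n × Fin q) (Fin n) ℝ :=
  fun ki j => (C * A ^ (ki.1 : ℕ)) ki.2 j

/-- Observability Gramian `W(t₁) = ∫₀^{t₁} exp(Aᵀτ) Cᵀ C exp(Aτ) dτ` (entrywise integral). -/
noncomputable def obsGram {n q : ℕ} (A : Matrix (Fin n) (Fin n) ℝ)
    (C : Matrix (Fin q) (Fin n) ℝ) (t₁ : ℝ) : Matrix (Fin n) (Fin n) ℝ :=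
  fun i j => ∫ τ in (0:ℝ)..t₁,
    (NormedSpace.exp (τ • Aᵀ) * Cᵀ * C * NormedSpace.exp (τ • A)) i j

lemma rank_eq_of_ker_eq {m m' : Type*} [Fintype m] [Fintype m'] {k : ℕ}
    (X : Matrix m (Fin k) ℝ) (Y : Matrix m' (Fin k) ℝ)
    (h : LinearMap.ker X.mulVecLin = LinearMap.ker Y.mulVecLin) : X.rank = Y.rank := by
  have hX := X.mulVecLin.finrank_range_add_finrank_ker
  have hY := Y.mulVecLin.finrank_range_add_finrank_ker
  rw [h] at hX
  rw [Matrix.rank, Matrix.rank]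
  omega

/-- **Weak duality (Theorem 1).** If `(C, A; F)` is functionally observable, i.e.
`rank([O; F]) = rank(O)` for the observability matrix `O` of `(C, A)`, then
`rank(F·Oᵀ) = rank(F)`, i.e. the dual system `(Aᵀ, Cᵀ; F)` is output controllable
(`Oᵀ` being the controllability matrix of `(Aᵀ, Cᵀ)` up to ordering of blocks). -/
theorem weak_duality {n q r : ℕ}
    (A : Matrix (Fin n) (Fin n) ℝ) (C : Matrix (Fin q) (Fin n) ℝ)
    (F : Matrix (Fin r) (Fin n) ℝ)
    (hfo : (Matrix.fromRows (obsMat C A) F).rank = (obsMat C A).rank) :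
    (F * (obsMat C A)ᵀ).rank = F.rank := by
  set O := obsMat C A with hO
  -- Step 1: rows of F lie in the row span of O, so F = M * O
  have hspan : Submodule.span ℝ (Set.range O) = Submodule.span ℝ (Set.range (Matrix.fromRows O F)) := by
    apply Submodule.eq_of_le_of_finrank_eq
    · apply Submodule.span_mono
      rintro _ ⟨i, rfl⟩
      exact ⟨Sum.inl i, rfl⟩
    · rw [Matrix.rank_eq_finrank_span_row, Matrix.rank_eq_finrank_span_row] at hfo
      exact hfo.symm
  have hrow : ∀ i, F i ∈ Submodule.span ℝ (Set.range O) := by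
    intro i
    rw [hspan]
    exact Submodule.subset_span ⟨Sum.inr i, rfl⟩
  have hM : ∃ M : Matrix (Fin r) (Fin n × Fin q) ℝ, F = M * O := by
    choose c hc using fun i => (Finsupp.mem_span_range_iff_exists_finsupp).1 (hrow i)
    refine ⟨fun i k => c i k, ?_⟩
    ext i j
    have := congrFun (hc i) j
    simp only [Finsupp.sum, Matrix.mul_apply] at this ⊢
    rw [← this]
    rw [Finset.sum_subset (Finset.subset_univ (c i).support)]
    · change _ = ∑ x, c i x * O x j
      simp [mul_comm]
    · intro k _ hk
      simp [Finsupp.notMem_support_iff.1 hk]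
  obtain ⟨M, hF⟩ := hM
  -- Step 2
  have hker : LinearMap.ker (O * Oᵀ).mulVecLin = LinearMap.ker Oᵀ.mulVecLin := by
    have := Matrix.ker_mulVecLin_conjTranspose_mul_self Oᵀ
    simpa [Matrix.conjTranspose_eq_transpose_of_trivial, Matrix.transpose_transpose] using this
  have hker2 : LinearMap.ker (O * Oᵀ * Mᵀ).mulVecLin = LinearMap.ker (Oᵀ * Mᵀ).mulVecLin := by
    ext x
    simp only [LinearMap.mem_ker, Matrix.mulVecLin_mul, LinearMap.comp_apply]
    constructor
    · intro hx
      have : Mᵀ.mulVecLin x ∈ LinearMap.ker (O * Oᵀ).mulVecLin := by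
        simpa [Matrix.mulVecLin_mul] using hx
      rw [hker] at this
      simpa using this
    · intro hx
      rw [hx]
      exact map_zero _
  calc (F * Oᵀ).rank = (F * Oᵀ)ᵀ.rank := (Matrix.rank_transpose _).symm
    _ = (O * Oᵀ * Mᵀ).rank := by rw [hF, Matrix.transpose_mul, Matrix.transpose_mul, Matrix.transpose_transpose, ← Matrix.mul_assoc]
    _ = (Oᵀ * Mᵀ).rank := rank_eq_of_ker_eq _ _ hker2
    _ = (M * O)ᵀ.rank := by rw [Matrix.transpose_mul]
    _ = F.rank := by rw [Matrix.rank_transpose, ← hF]
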